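/- Let q > 0 and define L(a) = ∫_1^∞ (v^{2q} − 1)^{−1/2} · sinh(a) · (1 + v² sinh(a)²)^{−1/2} dv for a > 0. Then L(a) < π/(2q) for every a > 0. -/

import Mathlib

/-- The half-height of the r-catenoid with neck radius `a` in `ℍⁿ × ℝ`. -/
noncomputable def catL (q a : ℝ) : ℝ :=
  ∫ v in Set.Ioi (1 : ℝ),
    (v ^ (2 * q) - 1) ^ (-(1 : ℝ) / 2) * Real.sinh a *
      (1 + v ^ 2 * Real.sinh a ^ 2) ^ (-(1 : ℝ) / 2)

open MeasureTheory Filter Set Real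

private lemma aux_rpow_neg_half (X : ℝ) (hX : 0 ≤ X) :
    X ^ (-(1 : ℝ) / 2) = (Real.sqrt X)⁻¹ := by
  rw [Real.sqrt_eq_rpow, ← Real.rpow_neg hX]
  norm_num

private lemma aux_X_pos {q x : ℝ} (hq : 0 < q) (hx : 1 < x) :
    0 < x ^ (2 * q) - 1 := by
  have : 1 < x ^ (2 * q) := by
    rw [Real.one_lt_rpow_iff_of_pos (by linarith)]
    exact Or.inl ⟨hx, by linarith⟩
  linarith

/-- Derivative of `(1/q) * arctan (√(x^(2q) - 1))`. -/
private lemma aux_hasDerivAt {q : ℝ} (hq : 0 < q) {x : ℝ} (hx : 1 < x) :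
    HasDerivAt (fun v : ℝ => (1 / q) * Real.arctan (Real.sqrt (v ^ (2 * q) - 1)))
      ((x ^ (2 * q) - 1) ^ (-(1 : ℝ) / 2) * x⁻¹) x := by
  have hx0 : (0 : ℝ) < x := by linarith
  have hX : 0 < x ^ (2 * q) - 1 := aux_X_pos hq hx
  have hsX : 0 < Real.sqrt (x ^ (2 * q) - 1) := Real.sqrt_pos.2 hX
  have h1 : HasDerivAt (fun v : ℝ => v ^ (2 * q) - 1) (2 * q * x ^ (2 * q - 1)) x :=
    (Real.hasDerivAt_rpow_const (Or.inl hx0.ne')).sub_const 1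
  have h2 := (h1.sqrt hX.ne').arctan.const_mul (1 / q)
  convert h2 using 1
  · rfl
  · rfl
  have hsq : Real.sqrt (x ^ (2 * q) - 1) ^ 2 = x ^ (2 * q) - 1 := Real.sq_sqrt hX.le
  rw [hsq, aux_rpow_neg_half _ hX.le]
  have hrw : x ^ (2 * q - 1) = x ^ (2 * q) * x⁻¹ := by
    rw [Real.rpow_sub hx0, Real.rpow_one, div_eq_mul_inv]
  have hxp : (0 : ℝ) < x ^ (2 * q) := Real.rpow_pos_of_pos hx0 _
  rw [hrw]
  have h1X : 1 + (x ^ (2 * q) - 1) = x ^ (2 * q) := by ring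
  rw [h1X]
  field_simp

private lemma aux_integral_g {q : ℝ} (hq : 0 < q) :
    (∫ x in Set.Ioi (1 : ℝ), (x ^ (2 * q) - 1) ^ (-(1 : ℝ) / 2) * x⁻¹)
      = Real.pi / (2 * q) ∧
    IntegrableOn (fun x : ℝ => (x ^ (2 * q) - 1) ^ (-(1 : ℝ) / 2) * x⁻¹)
      (Set.Ioi (1 : ℝ)) := by
  set G : ℝ → ℝ := fun v => (1 / q) * Real.arctan (Real.sqrt (v ^ (2 * q) - 1)) with hG
  have hcont : ContinuousWithinAt G (Set.Ici (1 : ℝ)) 1 := by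
    apply ContinuousAt.continuousWithinAt
    have h1 : ContinuousAt (fun v : ℝ => v ^ (2 * q) - 1) 1 :=
      ((Real.continuousAt_rpow_const 1 (2 * q) (Or.inl one_ne_zero))).sub
        continuousAt_const
    exact (continuousAt_const.mul
      ((Real.continuous_arctan.comp Real.continuous_sqrt).continuousAt.comp h1))
  have hderiv : ∀ x ∈ Set.Ioi (1 : ℝ),
      HasDerivAt G ((x ^ (2 * q) - 1) ^ (-(1 : ℝ) / 2) * x⁻¹) x :=
    fun x hx => aux_hasDerivAt hq hx
  have hpos : ∀ x ∈ Set.Ioi (1 : ℝ),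
      0 ≤ (x ^ (2 * q) - 1) ^ (-(1 : ℝ) / 2) * x⁻¹ := by
    intro x hx
    have hx1 : (1 : ℝ) < x := hx
    have := (aux_X_pos hq hx1).le
    positivity
  have hsqrtT : Tendsto Real.sqrt atTop atTop := by
    apply tendsto_atTop_atTop.2
    intro b
    refine ⟨b ^ 2, fun x hx => ?_⟩
    calc b ≤ |b| := le_abs_self b
    _ = Real.sqrt (b ^ 2) := (Real.sqrt_sq_eq_abs b).symm
    _ ≤ Real.sqrt x := Real.sqrt_le_sqrt hx
  have hT : Tendsto G atTop (nhds ((1 / q) * (Real.pi / 2))) := by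
    apply Tendsto.const_mul
    apply (tendsto_nhds_of_tendsto_nhdsWithin Real.tendsto_arctan_atTop).comp
    apply hsqrtT.comp
    exact (tendsto_atTop_add_const_right _ (-1) (tendsto_rpow_atTop (by linarith))).congr
      (fun x => (sub_eq_add_neg _ _).symm)
  have hG1 : G 1 = 0 := by
    simp [hG, Real.one_rpow]
  constructor
  · rw [integral_Ioi_of_hasDerivAt_of_nonneg hcont hderiv hpos hT, hG1, sub_zero]
    ring
  · exact integrableOn_Ioi_deriv_of_nonneg hcont hderiv hpos hT

private lemma aux_lt {q s x : ℝ} (hq : 0 < q) (hs : 0 < s) (hx : 1 < x) :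
    (x ^ (2 * q) - 1) ^ (-(1 : ℝ) / 2) * s * (1 + x ^ 2 * s ^ 2) ^ (-(1 : ℝ) / 2)
      < (x ^ (2 * q) - 1) ^ (-(1 : ℝ) / 2) * x⁻¹ := by
  have hx0 : (0 : ℝ) < x := by linarith
  have hX : 0 < x ^ (2 * q) - 1 := aux_X_pos hq hx
  have hXp : 0 < (x ^ (2 * q) - 1) ^ (-(1 : ℝ) / 2) := Real.rpow_pos_of_pos hX _
  have hT : (0 : ℝ) < 1 + x ^ 2 * s ^ 2 := by positivity
  have hsT : 0 < Real.sqrt (1 + x ^ 2 * s ^ 2) := Real.sqrt_pos.2 hT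
  rw [mul_assoc]
  apply mul_lt_mul_of_pos_left _ hXp
  rw [aux_rpow_neg_half _ hT.le]
  have key : s * x < Real.sqrt (1 + x ^ 2 * s ^ 2) := by
    have h1 : Real.sqrt ((s * x) ^ 2) < Real.sqrt (1 + x ^ 2 * s ^ 2) :=
      Real.sqrt_lt_sqrt (by positivity) (by nlinarith)
    rwa [Real.sqrt_sq (by positivity)] at h1
  have goal' : s / Real.sqrt (1 + x ^ 2 * s ^ 2) < 1 / x := by
    rw [div_lt_div_iff₀ hsT hx0]
    nlinarith [key]
  rw [← div_eq_mul_inv, ← one_div]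
  exact goal'

theorem stmt_9 (q : ℝ) (hq : 0 < q) (a : ℝ) (ha : 0 < a) :
    catL q a < Real.pi / (2 * q) := by
  have hs : 0 < Real.sinh a := Real.sinh_pos_iff.2 ha
  set s : ℝ := Real.sinh a with hsdef
  set g : ℝ → ℝ := fun x => (x ^ (2 * q) - 1) ^ (-(1 : ℝ) / 2) * x⁻¹ with hgdef
  set h : ℝ → ℝ := fun x =>
    (x ^ (2 * q) - 1) ^ (-(1 : ℝ) / 2) * s * (1 + x ^ 2 * s ^ 2) ^ (-(1 : ℝ) / 2) with hhdef
  obtain ⟨hval, hgint⟩ := aux_integral_g hq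
  have hlt : ∀ x ∈ Set.Ioi (1 : ℝ), h x < g x := fun x hx => aux_lt hq hs hx
  have hposh : ∀ x ∈ Set.Ioi (1 : ℝ), 0 ≤ h x := by
    intro x hx
    have hx1 : (1 : ℝ) < x := hx
    have hX := (aux_X_pos hq hx1).le
    have hT : (0 : ℝ) ≤ 1 + x ^ 2 * s ^ 2 := by positivity
    simp only [hhdef]
    positivity
  have hmeas : AEStronglyMeasurable h (volume.restrict (Set.Ioi (1 : ℝ))) := by
    apply ContinuousOn.aestronglyMeasurable _ measurableSet_Ioi
    apply ContinuousOn.mul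
    apply ContinuousOn.mul
    · apply ContinuousOn.rpow_const
      · intro x hx
        have hx1 : (1 : ℝ) < x := hx
        exact ContinuousWithinAt.sub
          ((Real.continuousAt_rpow_const x (2 * q)
            (Or.inl (by positivity : (0:ℝ) < x).ne')).continuousWithinAt)
          continuousWithinAt_const
      · intro x hx
        exact Or.inl (aux_X_pos hq hx).ne'
    · exact continuousOn_const
    · apply Continuous.continuousOn
      apply Continuous.rpow_const
      · continuity
      · intro x
        exact Or.inl (by positivity : (0:ℝ) < 1 + x ^ 2 * s ^ 2).ne'
  have hint : IntegrableOn h (Set.Ioi (1 : ℝ)) := by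
    apply Integrable.mono' hgint hmeas
    filter_upwards [ae_restrict_mem measurableSet_Ioi] with x hx
    rw [Real.norm_eq_abs, abs_of_nonneg (hposh x hx)]
    exact (hlt x hx).le
  have hdint : IntegrableOn (fun x => g x - h x) (Set.Ioi (1 : ℝ)) := hgint.sub hint
  have hdpos : 0 < ∫ x in Set.Ioi (1 : ℝ), (g x - h x) := by
    rw [setIntegral_pos_iff_support_of_nonneg_ae ?_ hdint]
    · have hsub : Set.Ioi (1 : ℝ) ⊆ Function.support (fun x => g x - h x) :=
        fun x hx => (sub_pos.2 (hlt x hx)).ne'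
      calc (0 : ENNReal) < volume (Set.Ioi (1 : ℝ)) := by
            rw [Real.volume_Ioi]; exact ENNReal.zero_lt_top
        _ ≤ volume (Function.support (fun x => g x - h x) ∩ Set.Ioi (1 : ℝ)) :=
            measure_mono (Set.subset_inter hsub Set.Subset.rfl)
    · filter_upwards [ae_restrict_mem measurableSet_Ioi] with x hx
      exact (sub_pos.2 (hlt x hx)).le
  have heq : ∫ x in Set.Ioi (1 : ℝ), (g x - h x)
      = (∫ x in Set.Ioi (1 : ℝ), g x) - ∫ x in Set.Ioi (1 : ℝ), h x :=
    integral_sub hgint hint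
  have hcat : catL q a = ∫ x in Set.Ioi (1 : ℝ), h x := rfl
  rw [hcat]
  have : (∫ x in Set.Ioi (1 : ℝ), g x) = Real.pi / (2 * q) := hval
  linarith
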